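/- arXiv:2302.08740 — 2 statements merged into one kernel-verified Lean document; each statement's English description precedes it below -/
import Mathlib

section
/- Greedy peeling is exact for maximizing the minimum weighted degree: consider the peeling process that, starting from V, repeatedly removes a vertex of minimum query-biased degree ρ in the current set. For every subset S ⊆ V, there exists some intermediate set V_t produced by the peeling that satisfies min_{u ∈ V_t} ρ_{V_t}(u) ≥ min_{u ∈ S} ρ_S(u). Hence the maximum over intermediate sets of the minimum query-biased degree equals the maximum over all subsets. -/
open Finset

/-- Query-biased temporal degree: sum of weights of neighbors of `u` inside `C`. -/
def qbd {V : Type*} [DecidableEq V] (G : SimpleGraph V) [DecidableRel G.Adj]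
    (w : V → ℝ) (C : Finset V) (u : V) : ℝ :=
  ∑ v ∈ C.filter (fun v => G.Adj u v), w v

theorem stmt_6 {V : Type*} [Fintype V] [DecidableEq V]
    (G : SimpleGraph V) [DecidableRel G.Adj]
    (w : V → ℝ) (hw : ∀ v, 0 ≤ w v)
    (Vs : ℕ → Finset V)
    (h0 : Vs 0 = Finset.univ)
    (hstep : ∀ t, (Vs t).Nonempty →
      ∃ u ∈ Vs t, (∀ v ∈ Vs t, qbd G w (Vs t) u ≤ qbd G w (Vs t) v) ∧
        Vs (t + 1) = (Vs t).erase u) :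
    (∀ S : Finset V, ∀ hS : S.Nonempty, ∃ t, ∃ ht : (Vs t).Nonempty,
      S.inf' hS (qbd G w S) ≤ (Vs t).inf' ht (qbd G w (Vs t))) ∧
    sSup {β : ℝ | ∃ t, ∃ ht : (Vs t).Nonempty, β = (Vs t).inf' ht (qbd G w (Vs t))} =
      sSup {β : ℝ | ∃ S : Finset V, ∃ hS : S.Nonempty, β = S.inf' hS (qbd G w S)} := by
  classical
  have hmono : ∀ (S C : Finset V) (u : V), S ⊆ C → qbd G w S u ≤ qbd G w C u := by
    intro S C u hSC
    apply Finset.sum_le_sum_of_subset_of_nonneg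
    · exact Finset.filter_subset_filter _ hSC
    · intro v _ _; exact hw v
  have key : ∀ S : Finset V, ∀ hS : S.Nonempty, ∃ t, ∃ ht : (Vs t).Nonempty,
      S.inf' hS (qbd G w S) ≤ (Vs t).inf' ht (qbd G w (Vs t)) := by
    intro S hS
    have hex : ∃ t, ¬ S ⊆ Vs t := by
      by_contra hall
      push_neg at hall
      have hcard : ∀ t, (Vs t).card + t ≤ Fintype.card V := by
        intro t
        induction t with
        | zero => simp [h0]
        | succ n ih =>
          have hne : (Vs n).Nonempty := hS.mono (hall n)
          obtain ⟨u, hu, _, heq⟩ := hstep n hne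
          have h1 : (Vs (n+1)).card = (Vs n).card - 1 := by
            rw [heq, Finset.card_erase_of_mem hu]
          have h2 : 1 ≤ (Vs n).card := Finset.card_pos.mpr hne
          omega
      have h3 := hcard (Fintype.card V + 1)
      have h4 : 1 ≤ (Vs (Fintype.card V + 1)).card :=
        Finset.card_pos.mpr (hS.mono (hall _))
      omega
    have ht0ne : Nat.find hex ≠ 0 := by
      intro h
      have := Nat.find_spec hex
      rw [h] at this
      exact this (by rw [h0]; exact Finset.subset_univ S)
    obtain ⟨t, heqt⟩ : ∃ t, Nat.find hex = t + 1 := ⟨Nat.find hex - 1, by omega⟩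
    have hSt : S ⊆ Vs t := by
      by_contra h
      have := Nat.find_min' hex h
      omega
    have hnSt1 : ¬ S ⊆ Vs (t + 1) := by
      have := Nat.find_spec hex
      rwa [heqt] at this
    have hne : (Vs t).Nonempty := hS.mono hSt
    obtain ⟨u, hu, hmin, heq⟩ := hstep t hne
    have huS : u ∈ S := by
      obtain ⟨s, hsS, hsn⟩ := Finset.not_subset.mp hnSt1
      rw [heq, Finset.mem_erase] at hsn
      push_neg at hsn
      rcases eq_or_ne s u with h | h
      · exact h ▸ hsS
      · exact absurd (hSt hsS) (hsn h)
    refine ⟨t, hne, ?_⟩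
    calc S.inf' hS (qbd G w S) ≤ qbd G w S u := Finset.inf'_le _ huS
      _ ≤ qbd G w (Vs t) u := hmono S (Vs t) u hSt
      _ ≤ (Vs t).inf' hne (qbd G w (Vs t)) := Finset.le_inf' _ _ (fun v hv => hmin v hv)
  refine ⟨key, ?_⟩
  set A := {β : ℝ | ∃ t, ∃ ht : (Vs t).Nonempty, β = (Vs t).inf' ht (qbd G w (Vs t))}
  set B := {β : ℝ | ∃ S : Finset V, ∃ hS : S.Nonempty, β = S.inf' hS (qbd G w S)}
  have hAB : A ⊆ B := by
    rintro β ⟨t, ht, rfl⟩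
    exact ⟨Vs t, ht, rfl⟩
  have hBfin : B.Finite := by
    have : B ⊆ Set.range (fun p : {S : Finset V // S.Nonempty} =>
        p.1.inf' p.2 (qbd G w p.1)) := by
      rintro β ⟨S, hS, rfl⟩
      exact ⟨⟨S, hS⟩, rfl⟩
    exact (Set.finite_range _).subset this
  rcases Set.eq_empty_or_nonempty B with hB | hB
  · have hA : A = ∅ := Set.subset_empty_iff.mp (hB ▸ hAB)
    rw [hA, hB]
  · obtain ⟨β, S, hS, rfl⟩ := hB
    obtain ⟨t, ht, hle⟩ := key S hS
    have hAne : A.Nonempty := ⟨_, t, ht, rfl⟩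
    have hBbdd : BddAbove B := hBfin.bddAbove
    have hAbdd : BddAbove A := hBbdd.mono hAB
    apply le_antisymm
    · exact csSup_le_csSup hBbdd hAne hAB
    · refine csSup_le ⟨S.inf' hS (qbd G w S), S, hS, rfl⟩ ?_
      rintro β ⟨T, hT, rfl⟩
      obtain ⟨t', ht', hle'⟩ := key T hT
      exact le_csSup_of_le hAbdd ⟨t', ht', rfl⟩ hle'
end

section
/- For the density objective f(C) = g(C)/|C| where g is a monotone nondecreasing supermodular set function with g(∅) = 0, any global maximizer C* of f satisfies f(C* ∪ C_q) ≥ f(C_q) for every nonempty set C_q. -/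
open Finset

theorem stmt_15 {V : Type*} [Fintype V] [DecidableEq V]
    (g : Finset V → ℝ) (hg0 : ∀ C, 0 ≤ g C)
    (hmono : ∀ A B : Finset V, A ⊆ B → g A ≤ g B)
    (hsuper : ∀ A B : Finset V, g A + g B ≤ g (A ∪ B) + g (A ∩ B))
    (hempty : g ∅ = 0)
    (f : Finset V → ℝ) (hf : ∀ C, f C = g C / (C.card : ℝ))
    (Cstar : Finset V) (hCstar : Cstar.Nonempty)
    (hopt : ∀ C : Finset V, C.Nonempty → f C ≤ f Cstar) :
    ∀ Cq : Finset V, Cq.Nonempty → f Cq ≤ f (Cstar ∪ Cq) := by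
  intro B hB
  set A := Cstar with hA
  have hUnion : (A ∪ B).Nonempty := hB.mono (subset_union_right)
  have hcardU : (0:ℝ) < ((A ∪ B).card : ℝ) := by exact_mod_cast card_pos.mpr hUnion
  have hcardA : (0:ℝ) < (A.card : ℝ) := by exact_mod_cast card_pos.mpr hCstar
  have hcardB : (0:ℝ) < (B.card : ℝ) := by exact_mod_cast card_pos.mpr hB
  have hgA : g A = f A * A.card := by rw [hf]; field_simp
  have hgB : g B = f B * B.card := by rw [hf]; field_simp
  have hfB_le_fA : f B ≤ f A := hopt B hB
  have hfB0 : 0 ≤ f B := by rw [hf]; exact div_nonneg (hg0 B) (Nat.cast_nonneg _)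
  -- g(A∩B) ≤ f A * card(A∩B)
  have hInter : g (A ∩ B) ≤ f A * ((A ∩ B).card : ℝ) := by
    rcases (A ∩ B).eq_empty_or_nonempty with he | hne
    · rw [he, hempty]; exact mul_nonneg (hfB0.trans hfB_le_fA) (Nat.cast_nonneg _)
    · have hle := hopt (A ∩ B) hne
      have hc : (0:ℝ) < ((A ∩ B).card : ℝ) := by exact_mod_cast card_pos.mpr hne
      have hle2 : g (A ∩ B) / ((A ∩ B).card : ℝ) ≤ f A := by rw [← hf]; exact hle
      calc g (A ∩ B) = g (A ∩ B) / ((A ∩ B).card : ℝ) * ((A ∩ B).card : ℝ) := by rw [div_mul_cancel₀ _ hc.ne']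
        _ ≤ f A * ((A ∩ B).card : ℝ) := mul_le_mul_of_nonneg_right hle2 hc.le
  have hcards : ((A ∪ B).card : ℝ) + ((A ∩ B).card : ℝ) = (A.card : ℝ) + (B.card : ℝ) := by
    exact_mod_cast congrArg (Nat.cast : ℕ → ℝ) (card_union_add_card_inter A B)
  have hIA : ((A ∩ B).card : ℝ) ≤ (A.card : ℝ) := by
    exact_mod_cast card_le_card (inter_subset_left)
  have key : f B * ((A ∪ B).card : ℝ) ≤ g (A ∪ B) := by
    have h1 : g A + g B ≤ g (A ∪ B) + g (A ∩ B) := hsuper A B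
    have h2 : f A * A.card + f B * B.card - f A * ((A ∩ B).card : ℝ) ≤ g (A ∪ B) := by
      rw [← hgA, ← hgB]; linarith
    have h3 : f B * ((A.card : ℝ) - ((A ∩ B).card : ℝ)) ≤ f A * ((A.card : ℝ) - ((A ∩ B).card : ℝ)) :=
      mul_le_mul_of_nonneg_right hfB_le_fA (by linarith)
    nlinarith
  rw [hf (A ∪ B), le_div_iff₀ hcardU]
  exact key
end
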